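/- Define m_0 := −1, L_0 := ∅, and inductively m_{i+1} := 3m_i + 16 and L_{i+1} := L_i ∪ ((m_i + 1) + ({0,1,2,5} ∪ ([m_i+10, 2m_i+15] ∩ ℤ))). Then for every j ≥ 0: m_j = 7·3^j − 8, |L_j| = 7(3^j − 1)/2 + 2j, and L_j + L_j = ([0, 2m_j] ∩ ℤ) \ {2(m_t + 5) : 0 ≤ t < j}. -/
import Mathlib


open Finset Pointwise

private lemma step_lemma (a : ℤ) (E L : Finset ℤ) (ha : -1 ≤ a)
    (hsub : ∀ x ∈ L, 0 ≤ x ∧ x ≤ a)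
    (hE : ∀ e ∈ E, e < a + 1)
    (hz : (0:ℤ) ∈ L ∨ a = -1)
    (hma : a ∈ L ∨ a = -1)
    (hLL : L + L = Finset.Icc 0 (2*a) \ E) :
    (L ∪ ((({0, 1, 2, 5} : Finset ℤ) ∪ Finset.Icc (a + 10) (2 * a + 15)).image
        (fun x => (a + 1) + x))) +
    (L ∪ ((({0, 1, 2, 5} : Finset ℤ) ∪ Finset.Icc (a + 10) (2 * a + 15)).image
        (fun x => (a + 1) + x)))
      = Finset.Icc 0 (2*(3*a+16)) \ (E ∪ {2*a+10}) := by
  set B := (({0, 1, 2, 5} : Finset ℤ) ∪ Finset.Icc (a + 10) (2 * a + 15)).image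
      (fun x => (a + 1) + x) with hB
  have hmemB : ∀ y : ℤ, y ∈ B ↔
      (y = a+1 ∨ y = a+2 ∨ y = a+3 ∨ y = a+6 ∨ (2*a+11 ≤ y ∧ y ≤ 3*a+16)) := by
    intro y
    simp only [hB, mem_image, mem_union, mem_insert, mem_singleton, mem_Icc]
    constructor
    · rintro ⟨x, hx, rfl⟩; omega
    · intro h; exact ⟨y - (a+1), by omega, by ring⟩
  have memL' : ∀ y : ℤ,
      (y ∈ L ∨ y = a+1 ∨ y = a+2 ∨ y = a+3 ∨ y = a+6 ∨ (2*a+11 ≤ y ∧ y ≤ 3*a+16)) →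
      y ∈ L ∪ B := by
    intro y h
    rw [mem_union, hmemB]
    exact h
  ext x
  rw [Finset.mem_add, mem_sdiff, mem_Icc]
  constructor
  · rintro ⟨p, hp, q, hq, rfl⟩
    have Hp : (p ∈ L ∧ 0 ≤ p ∧ p ≤ a) ∨ p = a+1 ∨ p = a+2 ∨ p = a+3 ∨ p = a+6 ∨
        (2*a+11 ≤ p ∧ p ≤ 3*a+16) := by
      rcases mem_union.mp hp with h | h
      · exact Or.inl ⟨h, hsub p h⟩
      · exact Or.inr ((hmemB p).mp h)
    have Hq : (q ∈ L ∧ 0 ≤ q ∧ q ≤ a) ∨ q = a+1 ∨ q = a+2 ∨ q = a+3 ∨ q = a+6 ∨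
        (2*a+11 ≤ q ∧ q ≤ 3*a+16) := by
      rcases mem_union.mp hq with h | h
      · exact Or.inl ⟨h, hsub q h⟩
      · exact Or.inr ((hmemB q).mp h)
    have Hp' : (0 ≤ p ∧ p ≤ a) ∨ p = a+1 ∨ p = a+2 ∨ p = a+3 ∨ p = a+6 ∨
        (2*a+11 ≤ p ∧ p ≤ 3*a+16) := Hp.imp_left And.right
    have Hq' : (0 ≤ q ∧ q ≤ a) ∨ q = a+1 ∨ q = a+2 ∨ q = a+3 ∨ q = a+6 ∨
        (2*a+11 ≤ q ∧ q ≤ 3*a+16) := Hq.imp_left And.right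
    by_cases hboth : p ∈ L ∧ q ∈ L
    · have hmem : p + q ∈ Finset.Icc 0 (2*a) \ E := by
        rw [← hLL]; exact add_mem_add hboth.1 hboth.2
      rw [mem_sdiff, mem_Icc] at hmem
      refine ⟨⟨hmem.1.1, by omega⟩, ?_⟩
      rw [mem_union, mem_singleton]
      rintro (h | h)
      · exact hmem.2 h
      · omega
    · have hge : a + 1 ≤ p + q := by
        rcases not_and_or.mp hboth with h | h
        · have hh : p = a+1 ∨ p = a+2 ∨ p = a+3 ∨ p = a+6 ∨
              (2*a+11 ≤ p ∧ p ≤ 3*a+16) := Hp.resolve_left (fun hc => h hc.1)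
          omega
        · have hh : q = a+1 ∨ q = a+2 ∨ q = a+3 ∨ q = a+6 ∨
              (2*a+11 ≤ q ∧ q ≤ 3*a+16) := Hq.resolve_left (fun hc => h hc.1)
          omega
      refine ⟨⟨by omega, by omega⟩, ?_⟩
      rw [mem_union, mem_singleton]
      rintro (h | h)
      · exact absurd (hE _ h) (by omega)
      · omega
  · rintro ⟨⟨hx0, hx1⟩, hxE'⟩
    rw [mem_union, mem_singleton] at hxE'
    push_neg at hxE'
    obtain ⟨hxE, hx10⟩ := hxE'
    have h0mem : (0:ℤ) ∈ L ∪ B := by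
      rcases hz with h | h
      · exact mem_union_left _ h
      · exact memL' 0 (by omega)
    by_cases c1 : x ≤ 2*a
    · have hx : x ∈ L + L := by
        rw [hLL, mem_sdiff, mem_Icc]
        exact ⟨⟨hx0, c1⟩, hxE⟩
      obtain ⟨p, hp, q, hq, h⟩ := Finset.mem_add.mp hx
      exact ⟨p, mem_union_left _ hp, q, mem_union_left _ hq, h⟩
    · by_cases c2 : x = 2*a+1
      · have haL : a ∈ L := by
          rcases hma with h|h
          · exact h
          · exact absurd hx0 (by omega)
        exact ⟨a, mem_union_left _ haL, a+1, memL' _ (by omega), by omega⟩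
      · by_cases c3 : x ≤ 2*a+4
        · exact ⟨a+1, memL' _ (by omega), x - (a+1), memL' _ (by omega), by ring⟩
        · by_cases c4 : x ≤ 2*a+6
          · exact ⟨a+3, memL' _ (by omega), x-(a+3), memL' _ (by omega), by ring⟩
          · by_cases c5 : x ≤ 2*a+9
            · exact ⟨a+6, memL' _ (by omega), x-(a+6), memL' _ (by omega), by ring⟩
            · by_cases c6 : x ≤ 3*a+16
              · exact ⟨0, h0mem, x, memL' _ (by omega), by ring⟩
              · by_cases c7 : x ≤ 4*a+17
                · exact ⟨a+1, memL' _ (by omega), x-(a+1), memL' _ (by omega), by ring⟩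
                · by_cases c8 : x ≤ 4*a+22
                  · exact ⟨a+6, memL' _ (by omega), x-(a+6), memL' _ (by omega), by ring⟩
                  · by_cases c9 : x ≤ 5*a+27
                    · exact ⟨2*a+11, memL' _ (by omega), x-(2*a+11), memL' _ (by omega), by ring⟩
                    · exact ⟨3*a+16, memL' _ (by omega), x-(3*a+16), memL' _ (by omega), by ring⟩

/-- The inductive construction in the proof of Theorem 8 (Case II):
with `m₀ = −1`, `L₀ = ∅`, `m_{i+1} = 3m_i + 16` and
`L_{i+1} = L_i ∪ ((m_i+1) + ({0,1,2,5} ∪ [m_i+10, 2m_i+15]))`, one has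
`m_j = 7·3^j − 8`, `|L_j| = 7(3^j−1)/2 + 2j`, and
`L_j + L_j = [0,2m_j] \ {2(m_t+5) : 0 ≤ t < j}` for every `j ≥ 0`. -/
theorem thm8_inductive_sets (m : ℕ → ℤ) (L : ℕ → Finset ℤ)
    (hm0 : m 0 = -1) (hL0 : L 0 = ∅)
    (hm : ∀ i, m (i + 1) = 3 * m i + 16)
    (hL : ∀ i, L (i + 1) = L i ∪
      ((({0, 1, 2, 5} : Finset ℤ) ∪ Finset.Icc (m i + 10) (2 * m i + 15)).image
        (fun x => (m i + 1) + x))) :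
    ∀ j : ℕ, m j = 7 * 3 ^ j - 8 ∧
      ((L j).card : ℤ) * 2 = 7 * (3 ^ j - 1) + 4 * j ∧
      L j + L j = Finset.Icc 0 (2 * m j) \
        ((Finset.range j).image (fun t : ℕ => 2 * (m t + 5))) := by
  have key : ∀ j : ℕ, m j = 7 * 3 ^ j - 8 ∧
      ((L j).card : ℤ) * 2 = 7 * (3 ^ j - 1) + 4 * j ∧
      (L j + L j = Finset.Icc 0 (2 * m j) \
        ((Finset.range j).image (fun t : ℕ => 2 * (m t + 5)))) ∧
      (∀ x ∈ L j, 0 ≤ x ∧ x ≤ m j) ∧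
      ((0:ℤ) ∈ L j ∨ m j = -1) ∧ (m j ∈ L j ∨ m j = -1) ∧
      (∀ t, t < j → 2 * (m t + 5) < m j + 1) := by
    intro j
    induction j with
    | zero =>
      refine ⟨by simpa using hm0, by simp [hL0], ?_, by simp [hL0],
        by simp [hm0], by simp [hm0], by omega⟩
      simp [hL0, hm0]
    | succ j ih =>
      obtain ⟨hmj, hcard, hLLj, hsub, hz, hma, hlt⟩ := ih
      have h3 : (1:ℤ) ≤ 3 ^ j := one_le_pow₀ (by norm_num)
      have ha : -1 ≤ m j := by rw [hmj]; linarith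
      set B := (({0, 1, 2, 5} : Finset ℤ) ∪ Finset.Icc (m j + 10) (2 * m j + 15)).image
          (fun x => (m j + 1) + x) with hBdef
      have hBlow : ∀ x ∈ B, m j + 1 ≤ x ∧ x ≤ 3 * m j + 16 := by
        intro x hx
        simp only [hBdef, mem_image, mem_union, mem_insert, mem_singleton, mem_Icc] at hx
        obtain ⟨y, hy, rfl⟩ := hx
        omega
      have hE : ∀ e ∈ (Finset.range j).image (fun t : ℕ => 2 * (m t + 5)), e < m j + 1 := by
        intro e he
        simp only [mem_image, mem_range] at he
        obtain ⟨t, ht, rfl⟩ := he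
        exact hlt t ht
      have hstep := step_lemma (m j) ((Finset.range j).image (fun t : ℕ => 2 * (m t + 5)))
        (L j) ha hsub hE hz hma hLLj
      have hLsucc : L (j+1) = L j ∪ B := hL j
      have hrange : (Finset.range (j+1)).image (fun t : ℕ => 2 * (m t + 5)) =
          ((Finset.range j).image (fun t : ℕ => 2 * (m t + 5))) ∪ {2 * m j + 10} := by
        rw [Finset.range_add_one, Finset.image_insert, Finset.insert_eq, union_comm]
        congr 1
        rw [Finset.singleton_inj]
        ring
      refine ⟨?_, ?_, ?_, ?_, ?_, ?_, ?_⟩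
      · rw [hm j, hmj]; ring
      · have hdisj : Disjoint (L j) B := by
          rw [Finset.disjoint_left]
          intro x hxL hxB
          have h1 := hsub x hxL
          have h2 := hBlow x hxB
          omega
        have hcardB : (B.card : ℤ) = m j + 10 := by
          rw [hBdef, Finset.card_image_of_injective _ (add_right_injective _)]
          rw [Finset.card_union_of_disjoint]
          · have h1 : ({0, 1, 2, 5} : Finset ℤ).card = 4 := by decide
            rw [h1, Int.card_Icc]
            push_cast [Int.toNat_of_nonneg (by omega : (0:ℤ) ≤ 2 * m j + 15 + 1 - (m j + 10))]
            ring
          · rw [Finset.disjoint_left]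
            intro x hx hx'
            simp only [mem_insert, mem_singleton] at hx
            rw [mem_Icc] at hx'
            omega
        rw [hLsucc, Finset.card_union_of_disjoint hdisj]
        push_cast
        rw [pow_succ] at *
        -- arithmetic
        linarith [hcardB]
      · rw [hLsucc, hrange, hm j]
        exact hstep
      · intro x hx
        rw [hLsucc, mem_union] at hx
        rw [hm j]
        rcases hx with h | h
        · have := hsub x h; omega
        · have := hBlow x h; omega
      · left
        rw [hLsucc, mem_union]
        rcases hz with h | h
        · exact Or.inl h
        · right
          simp only [hBdef, mem_image, mem_union, mem_insert, mem_singleton, mem_Icc]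
          exact ⟨0, by omega, by omega⟩
      · left
        rw [hLsucc, mem_union]
        right
        simp only [hBdef, mem_image, mem_union, mem_insert, mem_singleton, mem_Icc]
        exact ⟨2 * m j + 15, by omega, by rw [hm j]; ring⟩
      · intro t ht
        rw [hm j]
        rcases Nat.lt_succ_iff_lt_or_eq.mp ht with h | h
        · have := hlt t h; omega
        · subst h; omega
  intro j
  exact ⟨(key j).1, (key j).2.1, (key j).2.2.1⟩
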